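/- For the de Sitter-Schwarzschild potential f with f(s)^2 = 1 - s^2 - m s^{2-n} and horizon radii s1 < s2 (positive roots of f^2), the surface gravities κ1 = -s1 + ((n-2)m/2) s1^{1-n} and κ2 = s2 - ((n-2)m/2) s2^{1-n} are both positive. -/

import Mathlib

/-- For the de Sitter-Schwarzschild potential, the surface gravities
`κ1 = -s1 + ((n-2)m/2) s1^{1-n}` and `κ2 = s2 - ((n-2)m/2) s2^{1-n}` at the two
horizons `s1 < s2` (the two positive roots of `1 - s^2 - m s^{2-n}`) are positive. -/
theorem deSitterSchwarzschild_surface_gravities_positive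
    (n : ℕ) (hn : 3 ≤ n) (m : ℝ)
    (hm : 0 < m)
    (hm' : m < (2 / ((n : ℝ) - 2)) * (((n : ℝ) - 2) / n) ^ ((n : ℝ) / 2))
    (V : ℝ → ℝ) (hV : ∀ s : ℝ, V s = 1 - s ^ 2 - m * s ^ ((2 : ℤ) - (n : ℤ)))
    (s1 s2 : ℝ) (hs1 : 0 < s1) (hlt : s1 < s2)
    (hroot1 : V s1 = 0) (hroot2 : V s2 = 0)
    (honly : ∀ s : ℝ, 0 < s → V s = 0 → s = s1 ∨ s = s2) :
    0 < -s1 + (((n : ℝ) - 2) * m / 2) * s1 ^ ((1 : ℤ) - (n : ℤ)) ∧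
    0 < s2 - (((n : ℝ) - 2) * m / 2) * s2 ^ ((1 : ℤ) - (n : ℤ)) := by
  have hN : (3 : ℝ) ≤ (n : ℝ) := by exact_mod_cast hn
  have hN2 : (0 : ℝ) < (n : ℝ) - 2 := by linarith
  have hNpos : (0 : ℝ) < (n : ℝ) := by linarith
  set c : ℝ := ((n : ℝ) - 2) * m / 2 with hc
  have hcpos : 0 < c := by positivity
  set s0 : ℝ := c ^ (((n : ℝ))⁻¹) with hs0
  have hs0pos : 0 < s0 := Real.rpow_pos_of_pos hcpos _
  have hs0n : s0 ^ n = c := by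
    rw [hs0, ← Real.rpow_natCast (c ^ ((n:ℝ))⁻¹) n, ← Real.rpow_mul hcpos.le,
      inv_mul_cancel₀ (ne_of_gt hNpos), Real.rpow_one]
  -- s0^2 < (n-2)/n
  have ha : (0:ℝ) < ((n:ℝ) - 2) / n := by positivity
  have hb : (0:ℝ) < Real.sqrt (((n:ℝ) - 2) / n) := Real.sqrt_pos.mpr ha
  have hbn : (Real.sqrt (((n:ℝ) - 2) / n)) ^ n = (((n:ℝ) - 2) / n) ^ ((n : ℝ) / 2) := by
    rw [Real.sqrt_eq_rpow, ← Real.rpow_natCast ((((n:ℝ)-2)/n) ^ ((1:ℝ)/2)) n,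
      ← Real.rpow_mul ha.le]
    ring_nf
  have hclt : c < (((n:ℝ) - 2) / n) ^ ((n : ℝ) / 2) := by
    have h2 : (((n:ℝ)-2)/2) * m < (((n:ℝ)-2)/2) * ((2 / ((n : ℝ) - 2)) * (((n : ℝ) - 2) / n) ^ ((n : ℝ) / 2)) :=
      (mul_lt_mul_iff_right₀ (by positivity)).mpr hm'
    calc c = (((n:ℝ)-2)/2) * m := by ring
    _ < _ := h2
    _ = (((n : ℝ) - 2) / n) ^ ((n : ℝ) / 2) := by field_simp
  have hs0lt : s0 < Real.sqrt (((n:ℝ) - 2) / n) := by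
    refine lt_of_pow_lt_pow_left₀ n hb.le ?_
    rw [hs0n, hbn]; exact hclt
  have hs0sq : s0 ^ 2 < ((n:ℝ) - 2) / n := by
    have := pow_lt_pow_left₀ hs0lt hs0pos.le (two_ne_zero)
    rwa [Real.sq_sqrt ha.le] at this
  -- value at s0
  have hzpow : ∀ s : ℝ, 0 < s → s ^ ((2 : ℤ) - (n : ℤ)) = s ^ 2 / s ^ n := by
    intro s hs
    rw [zpow_sub₀ hs.ne', zpow_natCast, zpow_two]
    ring
  have hVs0 : 0 < V s0 := by
    rw [hV, hzpow s0 hs0pos, hs0n]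
    have hcne : c ≠ 0 := hcpos.ne'
    have : m * (s0 ^ 2 / c) = s0 ^ 2 * (2 / ((n:ℝ) - 2)) := by
      rw [hc]; field_simp
    rw [this]
    have key : s0 ^ 2 * ((n:ℝ)/((n:ℝ)-2)) < 1 := by
      calc s0 ^ 2 * ((n:ℝ)/((n:ℝ)-2)) < (((n:ℝ)-2)/n) * ((n:ℝ)/((n:ℝ)-2)) := by
            apply (mul_lt_mul_iff_left₀ (by positivity)).mpr hs0sq
      _ = 1 := by field_simp
    have hexp : s0 ^ 2 + s0 ^ 2 * (2 / ((n:ℝ) - 2)) = s0 ^ 2 * ((n:ℝ)/((n:ℝ)-2)) := by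
      field_simp; ring
    linarith
  -- continuity of V on Icc a b with 0 < a
  have hVeq : V = fun s => 1 - s ^ 2 - m * s ^ ((2 : ℤ) - (n : ℤ)) := funext hV
  have hcont : ∀ a b : ℝ, 0 < a → ContinuousOn V (Set.Icc a b) := by
    intro a b hapos
    rw [hVeq]
    apply ContinuousOn.sub
    · exact (continuousOn_const.sub (continuousOn_pow 2))
    · apply continuousOn_const.mul
      intro s hs
      exact (continuousAt_zpow₀ s _ (Or.inl (lt_of_lt_of_le hapos hs.1).ne')).continuousWithinAt
  -- s1 < s0
  have h1 : s1 < s0 := by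
    by_contra h
    push_neg at h
    have hne : s0 ≠ s1 := fun he => by rw [he, hroot1] at hVs0; exact lt_irrefl 0 hVs0
    have hlt1 : s0 < s1 := lt_of_le_of_ne h hne
    -- pick t small
    set t : ℝ := min s0 (m ^ (((n:ℝ) - 2)⁻¹)) / 2 with ht
    have hmp : 0 < m ^ (((n:ℝ) - 2)⁻¹) := Real.rpow_pos_of_pos hm _
    have htpos : 0 < t := by positivity
    have htlt : t < s0 := by
      have h' := min_le_left s0 (m ^ (((n:ℝ) - 2)⁻¹))
      rw [ht]; linarith
    have htm : t ^ (n - 2) < m := by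
      have h1' : t < m ^ (((n:ℝ) - 2)⁻¹) := by
        have h' := min_le_right s0 (m ^ (((n:ℝ) - 2)⁻¹))
        rw [ht]; linarith
      have h2' : t ^ (n-2) < (m ^ (((n:ℝ) - 2)⁻¹)) ^ (n-2) := by
        exact pow_lt_pow_left₀ h1' htpos.le (by omega)
      have h3' : (m ^ (((n:ℝ) - 2)⁻¹)) ^ (n-2) = m := by
        rw [← Real.rpow_natCast (m ^ (((n:ℝ) - 2)⁻¹)) (n-2), ← Real.rpow_mul hm.le]
        have : ((n - 2 : ℕ) : ℝ) = (n : ℝ) - 2 := by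
          push_cast [Nat.cast_sub (by omega : 2 ≤ n)]; ring
        rw [this, inv_mul_cancel₀ hN2.ne', Real.rpow_one]
      rwa [h3'] at h2'
    have hVt : V t < 0 := by
      rw [hV, hzpow t htpos]
      have htn : t ^ n = t ^ (n - 2) * t ^ 2 := by
        rw [← pow_add]; congr 1; omega
      have htnpos : 0 < t ^ n := pow_pos htpos n
      have ht2 : 0 < t ^ 2 := pow_pos htpos 2
      have : 1 < m * (t ^ 2 / t ^ n) := by
        rw [htn]
        rw [mul_div_assoc'] at *
        rw [lt_div_iff₀ (by positivity)]
        calc 1 * (t ^ (n-2) * t ^ 2) = t ^ (n-2) * t ^ 2 := by ring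
        _ < m * t ^ 2 := by exact (mul_lt_mul_iff_left₀ ht2).mpr htm
      nlinarith [sq_nonneg t]
    -- IVT on [t, s0]
    have := intermediate_value_Ioo htlt.le (hcont t s0 htpos)
    have hmem : (0:ℝ) ∈ Set.Ioo (V t) (V s0) := ⟨hVt, hVs0⟩
    obtain ⟨r, hr, hVr⟩ := this hmem
    have hrpos : 0 < r := lt_trans htpos hr.1
    rcases honly r hrpos hVr with he | he
    · exact (lt_trans hr.2 hlt1).ne he
    · exact ((lt_trans hr.2 hlt1).trans hlt).ne he
  -- s0 < s2
  have h2 : s0 < s2 := by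
    by_contra h
    push_neg at h
    have hne : s0 ≠ s2 := fun he => by rw [he, hroot2] at hVs0; exact lt_irrefl 0 hVs0
    have hlt2 : s2 < s0 := lt_of_le_of_ne h (Ne.symm hne)
    set T : ℝ := s0 + 1 with hT
    have hT1 : 1 < T := by simp [hT]; linarith
    have hVT : V T < 0 := by
      rw [hV]
      have : 0 < m * T ^ ((2:ℤ) - (n:ℤ)) := by
        apply mul_pos hm
        exact zpow_pos (by linarith) _
      nlinarith
    have := intermediate_value_Ioo' (by linarith : s0 ≤ T) (hcont s0 T hs0pos)
    have hmem : (0:ℝ) ∈ Set.Ioo (V T) (V s0) := ⟨hVT, hVs0⟩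
    obtain ⟨r, hr, hVr⟩ := this hmem
    have hrpos : 0 < r := lt_trans hs0pos hr.1
    rcases honly r hrpos hVr with he | he
    · exact (lt_trans (lt_trans hlt hlt2) hr.1).ne' he
    · exact (lt_trans hlt2 hr.1).ne' he
  -- conclusion
  have hs2pos : 0 < s2 := lt_trans hs1 hlt
  have hpow1 : ∀ s : ℝ, 0 < s → s ^ ((1 : ℤ) - (n : ℤ)) = s / s ^ n := by
    intro s hs
    rw [zpow_sub₀ hs.ne', zpow_one, zpow_natCast]
  constructor
  · rw [hpow1 s1 hs1]
    have hlt' : s1 ^ n < c := by rw [← hs0n]; exact pow_lt_pow_left₀ h1 hs1.le (by omega)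
    have h1n : 0 < s1 ^ n := pow_pos hs1 n
    rw [neg_add_eq_sub, sub_pos, ← mul_div_assoc, lt_div_iff₀ h1n]
    calc s1 * s1 ^ n < s1 * c := by exact (mul_lt_mul_iff_right₀ hs1).mpr hlt'
    _ = c * s1 := by ring
  · rw [hpow1 s2 hs2pos]
    have hlt' : c < s2 ^ n := by rw [← hs0n]; exact pow_lt_pow_left₀ h2 hs0pos.le (by omega)
    have h2n : 0 < s2 ^ n := pow_pos hs2pos n
    rw [sub_pos, ← mul_div_assoc, div_lt_iff₀ h2n]
    calc c * s2 < s2 ^ n * s2 := by exact (mul_lt_mul_iff_left₀ hs2pos).mpr hlt'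
    _ = s2 * s2 ^ n := by ring
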